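/- arXiv:0806.0459 — 2 statements merged into one kernel-verified Lean document; each statement's English description precedes it below -/
import Mathlib

section
/- For all reals λ₁, λ₂ ≠ 0, u > 0, d ≥ 1 a positive integer, and C > 1, the integral ∫_{Cu}^∞ ( |λ₁λ₂| · min(u/|λ₁|, v/|λ₂|)² / (uv) )^{2d} dv/v is bounded by a constant depending only on d and C, uniformly in λ₁, λ₂, u. -/
open MeasureTheory

private lemma aux_int {t a : ℝ} (ht : 0 < t) :
    (∀ x ∈ Set.Ici a, HasDerivAt (fun v : ℝ => -(2*t^2)/(t^2+v^2))
      (4*t^2*x/(t^2+x^2)^2) x) := by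
  intro x _
  have hx2 : t^2 + x^2 ≠ 0 := by positivity
  have h1 : HasDerivAt (fun v : ℝ => t^2 + v^2) (2*x) x := by
    simpa using (hasDerivAt_pow 2 x).const_add (t^2)
  have := (hasDerivAt_const x (-(2*t^2))).div h1 hx2
  refine this.congr_deriv ?_
  field_simp
  ring

private lemma aux_tend (t : ℝ) :
    Filter.Tendsto (fun v : ℝ => -(2*t^2)/(t^2+v^2)) Filter.atTop (nhds 0) := by
  have h : Filter.Tendsto (fun v : ℝ => t^2 + v^2) Filter.atTop Filter.atTop := by
    apply Filter.tendsto_atTop_add_const_left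
    simpa using (Filter.tendsto_pow_atTop (two_ne_zero)).comp Filter.tendsto_id
  have := h.inv_tendsto_atTop
  have h2 := this.const_mul (-(2*t^2))
  simpa [div_eq_mul_inv] using h2

set_option maxHeartbeats 1000000 in
/-- The key scalar integral estimate: for `d ≥ 1` and `C > 1` there is a bound `B`
(depending only on `d` and `C`) such that for all `λ₁, λ₂ ≠ 0` and `u > 0`,
`∫_{Cu}^∞ (|λ₁λ₂| min(u/|λ₁|, v/|λ₂|)² / (uv))^{2d} dv/v ≤ B`. -/
theorem stmt_3 (d : ℕ) (hd : 1 ≤ d) (C : ℝ) (hC : 1 < C) :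
    ∃ B : ℝ, 0 < B ∧ ∀ (lam₁ lam₂ : ℝ), lam₁ ≠ 0 → lam₂ ≠ 0 → ∀ u : ℝ, 0 < u →
      (∫ v in Set.Ioi (C * u),
          (|lam₁ * lam₂| * (min (u / |lam₁|) (v / |lam₂|)) ^ 2 / (u * v)) ^ (2 * d) / v)
        ≤ B := by
  refine ⟨2, by norm_num, fun lam₁ lam₂ h₁ h₂ u hu => ?_⟩
  have h₁' : (0:ℝ) < |lam₁| := abs_pos.mpr h₁
  have h₂' : (0:ℝ) < |lam₂| := abs_pos.mpr h₂
  set a := C * u with ha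
  have ha0 : 0 < a := mul_pos (lt_trans one_pos hC) hu
  set t := u * |lam₂| / |lam₁| with ht
  have ht0 : 0 < t := by positivity
  clear_value t a
  -- derivative facts
  have hder := aux_int (a := a) ht0
  have hpos : ∀ x ∈ Set.Ioi a, 0 ≤ 4*t^2*x/(t^2+x^2)^2 := by
    intro x hx
    have : 0 < x := lt_trans ha0 hx
    positivity
  have hint : IntegrableOn (fun x => 4*t^2*x/(t^2+x^2)^2) (Set.Ioi a) :=
    integrableOn_Ioi_deriv_of_nonneg' hder hpos (aux_tend t)
  have hval : (∫ x in Set.Ioi a, 4*t^2*x/(t^2+x^2)^2)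
      = 0 - (-(2*t^2)/(t^2+a^2)) :=
    integral_Ioi_of_hasDerivAt_of_nonneg' hder hpos (aux_tend t)
  have hval2 : (∫ x in Set.Ioi a, 4*t^2*x/(t^2+x^2)^2) ≤ 2 := by
    rw [hval]
    have h1 : (0:ℝ) < t^2 + a^2 := by positivity
    have he : (0:ℝ) - -(2*t^2)/(t^2+a^2) = 2*t^2/(t^2+a^2) := by ring
    rw [he, div_le_iff₀ h1]
    nlinarith
  -- pointwise bound
  have hmono : ∀ v ∈ Set.Ioi a,
      (|lam₁ * lam₂| * (min (u / |lam₁|) (v / |lam₂|)) ^ 2 / (u * v)) ^ (2 * d) / v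
        ≤ 4*t^2*v/(t^2+v^2)^2 := by
    intro v hv
    have hv0 : 0 < v := lt_trans ha0 hv
    have hmin : min (u / |lam₁|) (v / |lam₂|) = min t v / |lam₂| := by
      have hut : u / |lam₁| = t / |lam₂| := by rw [ht]; field_simp
      rw [hut, min_div_div_right h₂'.le]
    set E : ℝ := |lam₁ * lam₂| * (min (u / |lam₁|) (v / |lam₂|)) ^ 2 / (u * v) with hE
    clear_value E
    have hEeq : E = (min t v)^2 / (t * v) := by
      rw [hE, hmin, abs_mul, div_pow, ht]
      field_simp
    have hE0 : 0 ≤ E := by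
      rw [hEeq]; positivity
    have hE1 : E ≤ 1 := by
      rw [hEeq, div_le_one (by positivity)]
      rcases le_total t v with h | h
      · rw [min_eq_left h]; nlinarith
      · rw [min_eq_right h]; nlinarith
    have hEsq : E^2 ≤ 4*t^2*v^2/(t^2+v^2)^2 := by
      have hq : (0:ℝ) < (t^2+v^2)^2 := by positivity
      rw [hEeq, div_pow, div_le_div_iff₀ (by positivity) hq]
      rcases le_total t v with h | h
      · rw [min_eq_left h]
        have htv : t^2 ≤ v^2 := pow_le_pow_left₀ ht0.le h 2
        have hle : (t^2+v^2)^2 ≤ (2*v^2)^2 := pow_le_pow_left₀ (by positivity) (by linarith) 2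
        nlinarith [mul_le_mul_of_nonneg_left hle (by positivity : (0:ℝ) ≤ t^4)]
      · rw [min_eq_right h]
        have htv : v^2 ≤ t^2 := pow_le_pow_left₀ hv0.le h 2
        have hle : (t^2+v^2)^2 ≤ (2*t^2)^2 := pow_le_pow_left₀ (by positivity) (by linarith) 2
        nlinarith [mul_le_mul_of_nonneg_left hle (by positivity : (0:ℝ) ≤ v^4)]
    have hpow : E^(2*d) ≤ E^2 := pow_le_pow_of_le_one hE0 hE1 (by omega)
    calc E^(2*d) / v ≤ (4*t^2*v^2/(t^2+v^2)^2) / v :=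
          (div_le_div_iff_of_pos_right hv0).mpr (hpow.trans hEsq)
      _ = 4*t^2*v/(t^2+v^2)^2 := by field_simp
  -- conclude
  have := integral_mono_of_nonneg (μ := volume.restrict (Set.Ioi a))
    (f := fun v => (|lam₁ * lam₂| * (min (u / |lam₁|) (v / |lam₂|)) ^ 2 / (u * v)) ^ (2 * d) / v)
    (g := fun v => 4*t^2*v/(t^2+v^2)^2)
    ?_ hint ?_
  · exact this.trans hval2
  · filter_upwards [ae_restrict_mem measurableSet_Ioi] with v hv
    have hv0 : 0 < v := lt_trans ha0 hv
    have : 0 ≤ (|lam₁ * lam₂| * (min (u / |lam₁|) (v / |lam₂|)) ^ 2 / (u * v)) := by positivity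
    positivity
  · filter_upwards [ae_restrict_mem measurableSet_Ioi] with v hv
    exact hmono v hv
end

section
/- Let Ψ be Schwartz with Fourier transform supported in {1/2 ≤ |ξ| ≤ 2} and Φ Schwartz with Fourier transform supported in {|ξ| ≤ 1}. Let λ₁, λ₂ ≠ 0, 0 < ρ₁, ρ₂ ≤ 1, u, v > 0, k ∈ ℤ, and ψ Schwartz with annular Fourier support. If the function x ↦ ∫ Ψ_{2^k}(y) (Φ_{λ₁2^k} ∗ ψ_{u,q})(x − ρ₁λ₁y)(Φ_{λ₂2^k} ∗ ψ_{v,s})(x − ρ₂λ₂y) dy is not identically zero, then max(|λ₁|/u, |λ₂|/v) ≍ 2^{−k}, with implicit constants independent of ρ₁, ρ₂ ∈ (0,1]. -/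
open MeasureTheory
open scoped FourierTransform ENNReal NNReal

/-- L¹-normalized dilation `Φ_t(x) = |t|^{-d} Φ(t⁻¹ x)`. -/
noncomputable def dil {d : ℕ} (Φ : EuclideanSpace ℝ (Fin d) → ℂ) (t : ℝ)
    (x : EuclideanSpace ℝ (Fin d)) : ℂ :=
  ((|t| ^ d)⁻¹ : ℝ) • Φ (t⁻¹ • x)

/-- Dilation-translation `ψ_{u,q}(x) = u^{-d} ψ(u⁻¹(x − q))`. -/
noncomputable def dilTr {d : ℕ} (ψ : EuclideanSpace ℝ (Fin d) → ℂ) (u : ℝ)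
    (q x : EuclideanSpace ℝ (Fin d)) : ℂ :=
  ((|u| ^ d)⁻¹ : ℝ) • ψ (u⁻¹ • (x - q))

namespace Stmt14Aux

open Complex Real SchwartzMap
open scoped RealInnerProductSpace

variable {d : ℕ}
local notation "V" => EuclideanSpace ℝ (Fin d)
local notation "𝐜" r => ((Real.fourierChar r : Circle) : ℂ)

lemma circ_norm (r : ℝ) : ‖((Real.fourierChar r : Circle) : ℂ)‖ = 1 := by
  simp [Real.fourierChar_apply, Complex.norm_exp]

lemma circ_add (a b : ℝ) : (𝐜 (a + b)) = (𝐜 a) * (𝐜 b) := by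
  rw [AddChar.map_add_eq_mul, Circle.coe_mul]

lemma circ_cont : Continuous (fun r : ℝ => ((Real.fourierChar r : Circle) : ℂ)) :=
  continuous_subtype_val.comp Real.continuous_fourierChar

lemma cont_dil (f : SchwartzMap V ℂ) (t : ℝ) : Continuous (dil (⇑f) t) := by
  unfold dil; exact
  ((f.continuous.comp (continuous_const_smul (t⁻¹ : ℝ)))).const_smul ((|t| ^ d)⁻¹ : ℝ)

lemma cont_dilTr (f : SchwartzMap V ℂ) (u : ℝ) (q : V) : Continuous (dilTr (⇑f) u q) := by
  unfold dilTr; exact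
  ((f.continuous.comp ((continuous_id.sub continuous_const).const_smul (u⁻¹ : ℝ)))).const_smul ((|u| ^ d)⁻¹ : ℝ)

lemma int_dil (f : SchwartzMap V ℂ) {t : ℝ} (ht : t ≠ 0) :
    Integrable (dil (⇑f) t) := by
  have h1 : Integrable (fun x : V => f (t⁻¹ • x)) :=
    (f.integrable (μ := volume)).comp_smul (inv_ne_zero ht)
  exact h1.smul ((|t| ^ d)⁻¹ : ℝ)

lemma int_dilTr (f : SchwartzMap V ℂ) {u : ℝ} (hu : u ≠ 0) (q : V) :
    Integrable (dilTr (⇑f) u q) := by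
  have h1 : Integrable (fun x : V => f (u⁻¹ • x)) :=
    (f.integrable (μ := volume)).comp_smul (inv_ne_zero hu)
  have h2 : Integrable (fun x : V => f (u⁻¹ • (x - q))) := h1.comp_sub_right q
  exact h2.smul ((|u| ^ d)⁻¹ : ℝ)

lemma fourier_dil (f : V → ℂ) {t : ℝ} (ht : t ≠ 0) (ξ : V) :
    𝓕 (dil f t) ξ = 𝓕 f (t • ξ) := by
  have hD : Module.finrank ℝ (EuclideanSpace ℝ (Fin d)) = d := finrank_euclideanSpace_fin
  rw [Real.fourier_eq, Real.fourier_eq]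
  have key := MeasureTheory.Measure.integral_comp_smul (volume : Measure V)
    (fun v => (Real.fourierChar (-⟪v, ξ⟫) : Circle) • dil f t v) t
  rw [hD] at key
  have key2 : (∫ v, (Real.fourierChar (-⟪v, ξ⟫) : Circle) • dil f t v)
      = |t ^ d| • ∫ x, (Real.fourierChar (-⟪t • x, ξ⟫) : Circle) • dil f t (t • x) := by
    rw [key, smul_smul, abs_inv, mul_inv_cancel₀ (by positivity), one_smul]
  rw [key2]
  have hpt : ∀ x : V, (Real.fourierChar (-⟪t • x, ξ⟫) : Circle) • dil f t (t • x)
      = ((|t| ^ d)⁻¹ : ℝ) • ((Real.fourierChar (-⟪x, t • ξ⟫) : Circle) • f x) := by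
    intro x
    have h1 : ⟪t • x, ξ⟫ = ⟪x, t • ξ⟫ := by
      rw [real_inner_smul_left, real_inner_smul_right]
    have h2 : t⁻¹ • t • x = x := by rw [smul_smul, inv_mul_cancel₀ ht, one_smul]
    rw [dil, h1, h2, smul_comm]
  simp_rw [hpt]
  rw [integral_smul, smul_smul, _root_.abs_pow, mul_inv_cancel₀ (by positivity), one_smul]

lemma fourier_dilTr (f : V → ℂ) {u : ℝ} (hu : u ≠ 0) (q ξ : V) :
    𝓕 (dilTr f u q) ξ = (𝐜 (-⟪q, ξ⟫)) * 𝓕 f (u • ξ) := by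
  rw [Real.fourier_eq]
  have key := MeasureTheory.integral_add_right_eq_self (μ := (volume : Measure V))
    (fun x => (Real.fourierChar (-⟪x, ξ⟫) : Circle) • dilTr f u q x) q
  rw [← key]
  have hpt : ∀ x : V, (Real.fourierChar (-⟪x + q, ξ⟫) : Circle) • dilTr f u q (x + q)
      = (𝐜 (-⟪q, ξ⟫)) * ((Real.fourierChar (-⟪x, ξ⟫) : Circle) • dil f u x) := by
    intro x
    have : dilTr f u q (x + q) = dil f u x := by
      simp only [dilTr, dil, add_sub_cancel_right]
    rw [this, inner_add_left, neg_add, AddChar.map_add_eq_mul]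
    simp only [Circle.smul_def, Circle.coe_mul, smul_eq_mul]
    ring
  simp_rw [hpt]
  rw [MeasureTheory.integral_const_mul, ← Real.fourier_eq, fourier_dil f hu]

lemma ft_schwartz_cont (f : SchwartzMap V ℂ) : Continuous (𝓕 (⇑f)) := by
  have : 𝓕 (⇑f) = ⇑(fourierTransformCLM ℂ f) := by rw [fourierTransformCLM_apply]; rfl
  rw [this]; exact (fourierTransformCLM ℂ f).continuous

lemma ft_schwartz_int (f : SchwartzMap V ℂ) : Integrable (𝓕 (⇑f)) := by
  have : 𝓕 (⇑f) = ⇑(fourierTransformCLM ℂ f) := by rw [fourierTransformCLM_apply]; rfl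
  rw [this]; exact (fourierTransformCLM ℂ f).integrable

lemma ft_schwartz_bdd (f : SchwartzMap V ℂ) : ∃ C : ℝ, ∀ ξ : V, ‖𝓕 (⇑f) ξ‖ ≤ C := by
  refine ⟨‖(fourierTransformCLM ℂ f).toBoundedContinuousFunction‖, fun ξ => ?_⟩
  have h := (fourierTransformCLM ℂ f).toBoundedContinuousFunction.norm_coe_le_norm ξ
  simp [SchwartzMap.toBoundedContinuousFunction_apply] at h; exact h

lemma ft_dil_cont (f : SchwartzMap V ℂ) {t : ℝ} (ht : t ≠ 0) :
    Continuous (𝓕 (dil (⇑f) t)) := by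
  have : 𝓕 (dil (⇑f) t) = fun ξ => 𝓕 (⇑f) (t • ξ) := funext (fourier_dil (⇑f) ht)
  rw [this]; exact (ft_schwartz_cont f).comp (continuous_const_smul _)

lemma ft_dil_bdd (f : SchwartzMap V ℂ) {t : ℝ} (ht : t ≠ 0) :
    ∃ C : ℝ, ∀ ξ : V, ‖𝓕 (dil (⇑f) t) ξ‖ ≤ C := by
  obtain ⟨C, hC⟩ := ft_schwartz_bdd f
  exact ⟨C, fun ξ => by rw [fourier_dil (⇑f) ht]; exact hC _⟩

lemma ft_dilTr_cont (f : SchwartzMap V ℂ) {u : ℝ} (hu : u ≠ 0) (q : V) :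
    Continuous (𝓕 (dilTr (⇑f) u q)) := by
  have : 𝓕 (dilTr (⇑f) u q) = fun ξ => (𝐜 (-⟪q, ξ⟫)) * 𝓕 (⇑f) (u • ξ) :=
    funext (fourier_dilTr (⇑f) hu q)
  rw [this]
  exact ((circ_cont.comp (((continuous_const.inner continuous_id')).neg))).mul
    ((ft_schwartz_cont f).comp (continuous_const_smul _))

lemma ft_dilTr_int (f : SchwartzMap V ℂ) {u : ℝ} (hu : u ≠ 0) (q : V) :
    Integrable (𝓕 (dilTr (⇑f) u q)) := by
  have heq : 𝓕 (dilTr (⇑f) u q) = fun ξ => (𝐜 (-⟪q, ξ⟫)) * 𝓕 (⇑f) (u • ξ) :=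
    funext (fourier_dilTr (⇑f) hu q)
  rw [heq]
  have hint : Integrable (fun ξ : V => 𝓕 (⇑f) (u • ξ)) :=
    (ft_schwartz_int f).comp_smul hu
  refine hint.bdd_mul ?_ (Filter.Eventually.of_forall fun ξ => le_of_eq (circ_norm _))
  exact ((circ_cont.comp (((continuous_const.inner continuous_id')).neg))).aestronglyMeasurable

/-- Fourier representation of a convolution of two nice functions. -/
lemma conv_repr {φ g : V → ℂ} (hφc : Continuous φ) (hφi : Integrable φ)
    (hgc : Continuous g) (hgi : Integrable g)
    (hFgc : Continuous (𝓕 g)) (hFgi : Integrable (𝓕 g)) (z : V) :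
    (∫ w, φ w * g (z - w)) = ∫ η, (𝓕 φ η * 𝓕 g η) * (𝐜 ⟪η, z⟫) := by
  have hinv : ∀ z' : V, g z' = ∫ η, (𝐜 ⟪η, z'⟫) * 𝓕 g η := by
    intro z'
    conv_lhs => rw [← hgc.fourierInv_fourier_eq hgi hFgi]
    rw [Real.fourierInv_eq]
    simp_rw [Circle.smul_def, smul_eq_mul]
  have step1 : (∫ w, φ w * g (z - w))
      = ∫ w, ∫ η, φ w * ((𝐜 ⟪η, z - w⟫) * 𝓕 g η) := by
    congr 1; ext w
    rw [hinv (z - w), MeasureTheory.integral_const_mul]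
  rw [step1]
  have hInt : Integrable (Function.uncurry fun w η =>
      φ w * ((𝐜 ⟪η, z - w⟫) * 𝓕 g η)) ((volume : Measure V).prod volume) := by
    have hmaj : Integrable (fun p : V × V => ‖φ p.1‖ * ‖𝓕 g p.2‖)
        ((volume : Measure V).prod volume) := hφi.norm.mul_prod hFgi.norm
    have hcont : Continuous (fun p : V × V =>
        φ p.1 * ((𝐜 ⟪p.2, z - p.1⟫) * 𝓕 g p.2)) := by
      apply (hφc.comp continuous_fst).mul
      apply Continuous.mul _ (hFgc.comp continuous_snd)
      exact circ_cont.comp ((continuous_snd.inner (continuous_const.sub continuous_fst)))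
    refine hmaj.mono' hcont.aestronglyMeasurable (Filter.Eventually.of_forall fun p => ?_)
    simp only [Function.uncurry]
    rw [norm_mul, norm_mul, circ_norm, one_mul]
  rw [MeasureTheory.integral_integral_swap hInt]
  congr 1; ext η
  have hsplit : ∀ w : V, φ w * ((𝐜 ⟪η, z - w⟫) * 𝓕 g η)
      = ((𝐜 ⟪η, z⟫) * 𝓕 g η) * ((𝐜 (-⟪w, η⟫)) * φ w) := by
    intro w
    have h1 : ⟪η, z - w⟫ = ⟪η, z⟫ + (-⟪w, η⟫) := by
      rw [inner_sub_right, real_inner_comm w η]; ring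
    rw [h1, AddChar.map_add_eq_mul, Circle.coe_mul]
    ring
  simp_rw [hsplit]
  rw [MeasureTheory.integral_const_mul]
  have : (∫ w, (𝐜 (-⟪w, η⟫)) * φ w) = 𝓕 φ η := by
    rw [Real.fourier_eq]
    simp_rw [Circle.smul_def, smul_eq_mul]
  rw [this]; ring

/-- Master frequency-space representation of the bilinear expression. -/
lemma master (Ψd : V → ℂ) (hΨc : Continuous Ψd) (hΨi : Integrable Ψd)
    (P₁ P₂ : V → ℂ) (hP₁c : Continuous P₁) (hP₁i : Integrable P₁)
    (hP₂c : Continuous P₂) (hP₂i : Integrable P₂) (a₁ a₂ : ℝ) (x : V)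
    (G₁ G₂ : V → ℂ)
    (hG₁ : ∀ z : V, G₁ z = ∫ η, P₁ η * (𝐜 ⟪η, z⟫))
    (hG₂ : ∀ z : V, G₂ z = ∫ η, P₂ η * (𝐜 ⟪η, z⟫)) :
    (∫ y, Ψd y * G₁ (x - a₁ • y) * G₂ (x - a₂ • y))
      = ∫ p : V × V, (P₁ p.1 * P₂ p.2) * (𝐜 ⟪p.1 + p.2, x⟫) *
          𝓕 Ψd (a₁ • p.1 + a₂ • p.2) ∂((volume : Measure V).prod volume) := by
  have step1 : (∫ y, Ψd y * G₁ (x - a₁ • y) * G₂ (x - a₂ • y))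
      = ∫ y, ∫ p : V × V, Ψd y * ((P₁ p.1 * (𝐜 ⟪p.1, x - a₁ • y⟫)) *
          (P₂ p.2 * (𝐜 ⟪p.2, x - a₂ • y⟫))) ∂((volume : Measure V).prod volume) := by
    congr 1; ext y
    rw [hG₁, hG₂, mul_assoc,
      ← MeasureTheory.integral_prod_mul (μ := (volume : Measure V)) (ν := volume)
        (fun η => P₁ η * (𝐜 ⟪η, x - a₁ • y⟫)) (fun η => P₂ η * (𝐜 ⟪η, x - a₂ • y⟫)),
      MeasureTheory.integral_const_mul]
  rw [step1]
  have hInt : Integrable (Function.uncurry fun (y : V) (p : V × V) =>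
      Ψd y * ((P₁ p.1 * (𝐜 ⟪p.1, x - a₁ • y⟫)) * (P₂ p.2 * (𝐜 ⟪p.2, x - a₂ • y⟫))))
      ((volume : Measure V).prod ((volume : Measure V).prod volume)) := by
    have hmaj : Integrable (fun z : V × (V × V) => ‖Ψd z.1‖ * (‖P₁ z.2.1‖ * ‖P₂ z.2.2‖))
        ((volume : Measure V).prod ((volume : Measure V).prod volume)) :=
      hΨi.norm.mul_prod (hP₁i.norm.mul_prod hP₂i.norm)
    have hcont : Continuous (fun z : V × (V × V) =>
        Ψd z.1 * ((P₁ z.2.1 * (𝐜 ⟪z.2.1, x - a₁ • z.1⟫)) *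
          (P₂ z.2.2 * (𝐜 ⟪z.2.2, x - a₂ • z.1⟫)))) := by
      refine (hΨc.comp continuous_fst).mul (Continuous.mul ?_ ?_)
      · refine (hP₁c.comp (continuous_fst.comp continuous_snd)).mul ?_
        exact circ_cont.comp ((continuous_fst.comp continuous_snd).inner
          (continuous_const.sub (continuous_fst.const_smul a₁)))
      · refine (hP₂c.comp (continuous_snd.comp continuous_snd)).mul ?_
        exact circ_cont.comp ((continuous_snd.comp continuous_snd).inner
          (continuous_const.sub (continuous_fst.const_smul a₂)))
    refine hmaj.mono' hcont.aestronglyMeasurable (Filter.Eventually.of_forall fun z => ?_)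
    simp only [Function.uncurry]
    rw [norm_mul, norm_mul, norm_mul, norm_mul, circ_norm, circ_norm, mul_one, mul_one]
  rw [MeasureTheory.integral_integral_swap hInt]
  congr 1; ext p
  have hsplit : ∀ y : V, Ψd y * ((P₁ p.1 * (𝐜 ⟪p.1, x - a₁ • y⟫)) *
        (P₂ p.2 * (𝐜 ⟪p.2, x - a₂ • y⟫)))
      = ((P₁ p.1 * P₂ p.2) * (𝐜 ⟪p.1 + p.2, x⟫)) *
          ((𝐜 (-⟪y, a₁ • p.1 + a₂ • p.2⟫)) * Ψd y) := by
    intro y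
    have h1 : ⟪p.1, x - a₁ • y⟫ = ⟪p.1, x⟫ + (- (a₁ * ⟪y, p.1⟫)) := by
      rw [inner_sub_right, real_inner_smul_right, real_inner_comm p.1 y]; ring
    have h2 : ⟪p.2, x - a₂ • y⟫ = ⟪p.2, x⟫ + (- (a₂ * ⟪y, p.2⟫)) := by
      rw [inner_sub_right, real_inner_smul_right, real_inner_comm p.2 y]; ring
    have h3 : (⟪p.1 + p.2, x⟫ : ℝ) = ⟪p.1, x⟫ + ⟪p.2, x⟫ := inner_add_left _ _ _
    have h4 : (-⟪y, a₁ • p.1 + a₂ • p.2⟫ : ℝ) = (- (a₁ * ⟪y, p.1⟫)) + (- (a₂ * ⟪y, p.2⟫)) := by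
      rw [inner_add_right, real_inner_smul_right, real_inner_smul_right]; ring
    rw [h1, h2, h3, h4, circ_add, circ_add, circ_add, circ_add]
    ring
  simp_rw [hsplit]
  rw [MeasureTheory.integral_const_mul]
  have : (∫ y, (𝐜 (-⟪y, a₁ • p.1 + a₂ • p.2⟫)) * Ψd y) = 𝓕 Ψd (a₁ • p.1 + a₂ • p.2) := by
    rw [Real.fourier_eq]
    simp_rw [Circle.smul_def, smul_eq_mul]
  rw [this]

set_option maxHeartbeats 2000000 in
theorem main (d : ℕ) (hd : 0 < d)
    (Ψ Φ ψ : SchwartzMap (EuclideanSpace ℝ (Fin d)) ℂ)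
    (hΨ : ∀ ξ : EuclideanSpace ℝ (Fin d), ‖ξ‖ < 1 / 2 ∨ 2 < ‖ξ‖ → 𝓕 (fun x => Ψ x) ξ = 0)
    (hΦ : ∀ ξ : EuclideanSpace ℝ (Fin d), 1 < ‖ξ‖ → 𝓕 (fun x => Φ x) ξ = 0)
    (c₁ c₂ : ℝ) (hc₁ : 0 < c₁) (hc₁₂ : c₁ < c₂)
    (hψ : ∀ ξ : EuclideanSpace ℝ (Fin d), ‖ξ‖ < c₁ ∨ c₂ < ‖ξ‖ → 𝓕 (fun x => ψ x) ξ = 0) :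
    ∃ C₁ C₂ : ℝ, 0 < C₁ ∧ 0 < C₂ ∧
      ∀ (lam₁ lam₂ : ℝ), lam₁ ≠ 0 → lam₂ ≠ 0 →
      ∀ (ρ₁ ρ₂ : ℝ), 0 < ρ₁ → ρ₁ ≤ 1 → 0 < ρ₂ → ρ₂ ≤ 1 →
      ∀ (u v : ℝ), 0 < u → 0 < v → ∀ (k : ℤ) (q s : EuclideanSpace ℝ (Fin d)),
        ¬ (∀ x : EuclideanSpace ℝ (Fin d),
            (∫ y, dil (fun w => Ψ w) ((2 : ℝ) ^ k) y *
              (∫ w, dil (fun z => Φ z) (lam₁ * 2 ^ k) w *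
                dilTr (fun z => ψ z) u q (x - ρ₁ • (lam₁ • y) - w)) *
              (∫ w, dil (fun z => Φ z) (lam₂ * 2 ^ k) w *
                dilTr (fun z => ψ z) v s (x - ρ₂ • (lam₂ • y) - w))) = 0) →
        C₁ * (2 : ℝ) ^ (-k) ≤ max (|lam₁| / u) (|lam₂| / v) ∧
          max (|lam₁| / u) (|lam₂| / v) ≤ C₂ * (2 : ℝ) ^ (-k) := by
  have hc₂ : 0 < c₂ := lt_trans hc₁ hc₁₂
  refine ⟨1 / (4 * c₂), 1 / c₁, by positivity, by positivity, ?_⟩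
  intro lam₁ lam₂ hl₁ hl₂ ρ₁ ρ₂ hρ₁ hρ₁1 hρ₂ hρ₂1 u v hu hv k q s hne
  by_contra hcon
  apply hne
  intro x
  have hΨ' : ∀ ξ : (EuclideanSpace ℝ (Fin d)), ‖ξ‖ < 1 / 2 ∨ 2 < ‖ξ‖ → 𝓕 (⇑Ψ) ξ = 0 := hΨ
  have hΦ' : ∀ ξ : (EuclideanSpace ℝ (Fin d)), 1 < ‖ξ‖ → 𝓕 (⇑Φ) ξ = 0 := hΦ
  have hψ' : ∀ ξ : (EuclideanSpace ℝ (Fin d)), ‖ξ‖ < c₁ ∨ c₂ < ‖ξ‖ → 𝓕 (⇑ψ) ξ = 0 := hψ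
  have hT0 : (0:ℝ) < (2:ℝ) ^ k := zpow_pos (by norm_num) k
  have hB0 : (0:ℝ) < (2:ℝ) ^ (-k) := zpow_pos (by norm_num) (-k)
  have hTB : (2:ℝ) ^ k * (2:ℝ) ^ (-k) = 1 := by
    rw [← zpow_add₀ (by norm_num : (2:ℝ) ≠ 0)]; simp
  have ht₁ : lam₁ * (2:ℝ) ^ k ≠ 0 := mul_ne_zero hl₁ hT0.ne'
  have ht₂ : lam₂ * (2:ℝ) ^ k ≠ 0 := mul_ne_zero hl₂ hT0.ne'
  have habs₁ : (0:ℝ) < |lam₁| := abs_pos.mpr hl₁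
  have habs₂ : (0:ℝ) < |lam₂| := abs_pos.mpr hl₂
  set M := max (|lam₁| / u) (|lam₂| / v) with hMdef
  have hm1 : |lam₁| / u ≤ M := le_max_left _ _
  have hm2 : |lam₂| / v ≤ M := le_max_right _ _
  have hM0 : (0:ℝ) ≤ M := le_trans (by positivity) hm1
  simp only [smul_smul]
  -- the two P functions
  have hP₁c : Continuous (fun η : (EuclideanSpace ℝ (Fin d)) =>
      𝓕 (dil (⇑Φ) (lam₁ * 2 ^ k)) η * 𝓕 (dilTr (⇑ψ) u q) η) :=
    (ft_dil_cont Φ ht₁).mul (ft_dilTr_cont ψ hu.ne' q)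
  have hP₁i : Integrable (fun η : (EuclideanSpace ℝ (Fin d)) =>
      𝓕 (dil (⇑Φ) (lam₁ * 2 ^ k)) η * 𝓕 (dilTr (⇑ψ) u q) η) :=
    (ft_dilTr_int ψ hu.ne' q).bdd_mul (ft_dil_cont Φ ht₁).aestronglyMeasurable
      (Filter.Eventually.of_forall (ft_dil_bdd Φ ht₁).choose_spec)
  have hP₂c : Continuous (fun η : (EuclideanSpace ℝ (Fin d)) =>
      𝓕 (dil (⇑Φ) (lam₂ * 2 ^ k)) η * 𝓕 (dilTr (⇑ψ) v s) η) :=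
    (ft_dil_cont Φ ht₂).mul (ft_dilTr_cont ψ hv.ne' s)
  have hP₂i : Integrable (fun η : (EuclideanSpace ℝ (Fin d)) =>
      𝓕 (dil (⇑Φ) (lam₂ * 2 ^ k)) η * 𝓕 (dilTr (⇑ψ) v s) η) :=
    (ft_dilTr_int ψ hv.ne' s).bdd_mul (ft_dil_cont Φ ht₂).aestronglyMeasurable
      (Filter.Eventually.of_forall (ft_dil_bdd Φ ht₂).choose_spec)
  have hG₁ : ∀ z : (EuclideanSpace ℝ (Fin d)), (∫ w, dil (⇑Φ) (lam₁ * 2 ^ k) w * dilTr (⇑ψ) u q (z - w))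
      = ∫ η, (𝓕 (dil (⇑Φ) (lam₁ * 2 ^ k)) η * 𝓕 (dilTr (⇑ψ) u q) η) *
          ((Real.fourierChar ⟪η, z⟫ : Circle) : ℂ) :=
    fun z => conv_repr (cont_dil Φ _) (int_dil Φ ht₁) (cont_dilTr ψ u q)
      (int_dilTr ψ hu.ne' q) (ft_dilTr_cont ψ hu.ne' q) (ft_dilTr_int ψ hu.ne' q) z
  have hG₂ : ∀ z : (EuclideanSpace ℝ (Fin d)), (∫ w, dil (⇑Φ) (lam₂ * 2 ^ k) w * dilTr (⇑ψ) v s (z - w))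
      = ∫ η, (𝓕 (dil (⇑Φ) (lam₂ * 2 ^ k)) η * 𝓕 (dilTr (⇑ψ) v s) η) *
          ((Real.fourierChar ⟪η, z⟫ : Circle) : ℂ) :=
    fun z => conv_repr (cont_dil Φ _) (int_dil Φ ht₂) (cont_dilTr ψ v s)
      (int_dilTr ψ hv.ne' s) (ft_dilTr_cont ψ hv.ne' s) (ft_dilTr_int ψ hv.ne' s) z
  have key : (∫ y, dil (⇑Ψ) ((2 : ℝ) ^ k) y *
        (∫ w, dil (⇑Φ) (lam₁ * 2 ^ k) w * dilTr (⇑ψ) u q (x - (ρ₁ * lam₁) • y - w)) *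
        (∫ w, dil (⇑Φ) (lam₂ * 2 ^ k) w * dilTr (⇑ψ) v s (x - (ρ₂ * lam₂) • y - w)))
      = ∫ p : (EuclideanSpace ℝ (Fin d)) × (EuclideanSpace ℝ (Fin d)),
          ((𝓕 (dil (⇑Φ) (lam₁ * 2 ^ k)) p.1 * 𝓕 (dilTr (⇑ψ) u q) p.1) *
            (𝓕 (dil (⇑Φ) (lam₂ * 2 ^ k)) p.2 * 𝓕 (dilTr (⇑ψ) v s) p.2)) *
          ((Real.fourierChar ⟪p.1 + p.2, x⟫ : Circle) : ℂ) *
          𝓕 (dil (⇑Ψ) ((2:ℝ) ^ k)) ((ρ₁ * lam₁) • p.1 + (ρ₂ * lam₂) • p.2)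
        ∂((volume : Measure (EuclideanSpace ℝ (Fin d))).prod volume) :=
    master (dil (⇑Ψ) ((2:ℝ) ^ k)) (cont_dil Ψ _) (int_dil Ψ hT0.ne') _ _
      hP₁c hP₁i hP₂c hP₂i (ρ₁ * lam₁) (ρ₂ * lam₂) x _ _ hG₁ hG₂
  rw [key]
  have hvanish : ∀ p : (EuclideanSpace ℝ (Fin d)) × (EuclideanSpace ℝ (Fin d)),
      ((𝓕 (dil (⇑Φ) (lam₁ * 2 ^ k)) p.1 * 𝓕 (dilTr (⇑ψ) u q) p.1) *
        (𝓕 (dil (⇑Φ) (lam₂ * 2 ^ k)) p.2 * 𝓕 (dilTr (⇑ψ) v s) p.2)) *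
      ((Real.fourierChar ⟪p.1 + p.2, x⟫ : Circle) : ℂ) *
      𝓕 (dil (⇑Ψ) ((2:ℝ) ^ k)) ((ρ₁ * lam₁) • p.1 + (ρ₂ * lam₂) • p.2) = 0 := by
    intro p
    rw [fourier_dil (⇑Φ) ht₁, fourier_dilTr (⇑ψ) hu.ne', fourier_dil (⇑Φ) ht₂,
      fourier_dilTr (⇑ψ) hv.ne', fourier_dil (⇑Ψ) hT0.ne']
    rcases not_and_or.mp hcon with hlow | hup
    · -- max too small: the Ψ factor vanishes
      push_neg at hlow
      by_cases h1 : c₂ < ‖u • p.1‖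
      · rw [hψ' _ (Or.inr h1)]; ring
      by_cases h2 : c₂ < ‖v • p.2‖
      · rw [hψ' _ (Or.inr h2)]; ring
      push_neg at h1 h2
      have hup1 : u * ‖p.1‖ ≤ c₂ := by
        rw [norm_smul, Real.norm_eq_abs, abs_of_pos hu] at h1; exact h1
      have hvp2 : v * ‖p.2‖ ≤ c₂ := by
        rw [norm_smul, Real.norm_eq_abs, abs_of_pos hv] at h2; exact h2
      have hl1M : |lam₁| ≤ M * u := (div_le_iff₀ hu).mp hm1
      have hl2M : |lam₂| ≤ M * v := (div_le_iff₀ hv).mp hm2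
      have hb1 : ρ₁ * |lam₁| * ‖p.1‖ ≤ c₂ * M := by
        nlinarith [mul_le_mul_of_nonneg_right hl1M (norm_nonneg (p.1 : (EuclideanSpace ℝ (Fin d)))),
          mul_le_mul_of_nonneg_left hup1 hM0,
          mul_nonneg (abs_nonneg lam₁) (norm_nonneg (p.1 : (EuclideanSpace ℝ (Fin d))))]
      have hb2 : ρ₂ * |lam₂| * ‖p.2‖ ≤ c₂ * M := by
        nlinarith [mul_le_mul_of_nonneg_right hl2M (norm_nonneg (p.2 : (EuclideanSpace ℝ (Fin d)))),
          mul_le_mul_of_nonneg_left hvp2 hM0,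
          mul_nonneg (abs_nonneg lam₂) (norm_nonneg (p.2 : (EuclideanSpace ℝ (Fin d))))]
      have hζ : ‖(ρ₁ * lam₁) • p.1 + (ρ₂ * lam₂) • p.2‖ ≤ 2 * c₂ * M := by
        calc ‖(ρ₁ * lam₁) • p.1 + (ρ₂ * lam₂) • p.2‖
            ≤ ‖(ρ₁ * lam₁) • (p.1 : (EuclideanSpace ℝ (Fin d)))‖ + ‖(ρ₂ * lam₂) • (p.2 : (EuclideanSpace ℝ (Fin d)))‖ := norm_add_le _ _
          _ = |ρ₁ * lam₁| * ‖(p.1 : (EuclideanSpace ℝ (Fin d)))‖ + |ρ₂ * lam₂| * ‖(p.2 : (EuclideanSpace ℝ (Fin d)))‖ := by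
              rw [norm_smul, norm_smul, Real.norm_eq_abs, Real.norm_eq_abs]
          _ = ρ₁ * |lam₁| * ‖(p.1 : (EuclideanSpace ℝ (Fin d)))‖ + ρ₂ * |lam₂| * ‖(p.2 : (EuclideanSpace ℝ (Fin d)))‖ := by
              rw [abs_mul, abs_mul, abs_of_pos hρ₁, abs_of_pos hρ₂]
          _ ≤ c₂ * M + c₂ * M := add_le_add hb1 hb2
          _ = 2 * c₂ * M := by ring
      have hlow' : M * (4 * c₂) < (2:ℝ) ^ (-k) := by
        rw [div_mul_eq_mul_div, one_mul] at hlow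
        exact (lt_div_iff₀ (by positivity)).mp hlow
      have hnorm : ‖(2:ℝ) ^ k • ((ρ₁ * lam₁) • p.1 + (ρ₂ * lam₂) • (p.2 : (EuclideanSpace ℝ (Fin d))))‖ < 1 / 2 := by
        rw [norm_smul, Real.norm_eq_abs, abs_of_pos hT0]
        have h9 := mul_le_mul_of_nonneg_left hζ hT0.le
        have h10 := mul_lt_mul_of_pos_left hlow' hT0
        rw [hTB] at h10
        nlinarith [h9, h10, hT0]
      rw [hΨ' _ (Or.inl hnorm)]; ring
    · -- max too large: one of the Φ·ψ factors vanishes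
      push_neg at hup
      rcases lt_max_iff.mp hup with h | h
      · by_cases h1 : ‖u • p.1‖ < c₁
        · rw [hψ' _ (Or.inl h1)]; ring
        · push_neg at h1
          have h1' : c₁ ≤ u * ‖p.1‖ := by
            rw [norm_smul, Real.norm_eq_abs, abs_of_pos hu] at h1; exact h1
          have h' : (2:ℝ) ^ (-k) * u < |lam₁| * c₁ := by
            rw [div_mul_eq_mul_div, one_mul] at h
            exact (div_lt_div_iff₀ hc₁ hu).mp h
          have hnorm : 1 < ‖(lam₁ * 2 ^ k) • (p.1 : (EuclideanSpace ℝ (Fin d)))‖ := by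
            rw [norm_smul, Real.norm_eq_abs, abs_mul, abs_of_pos hT0]
            have h5 : |lam₁| * c₁ ≤ |lam₁| * (u * ‖p.1‖) :=
              mul_le_mul_of_nonneg_left h1' habs₁.le
            have h6 : (2:ℝ) ^ (-k) * u < |lam₁| * (u * ‖p.1‖) :=
              lt_of_lt_of_le h' h5
            have h7 := mul_lt_mul_of_pos_left h6 hT0
            have h8 : (2:ℝ) ^ k * ((2:ℝ) ^ (-k) * u) = u := by
              rw [← mul_assoc, hTB, one_mul]
            rw [h8] at h7
            nlinarith [h7, hu]
          rw [hΦ' _ hnorm]; ring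
      · by_cases h2 : ‖v • p.2‖ < c₁
        · rw [hψ' _ (Or.inl h2)]; ring
        · push_neg at h2
          have h2' : c₁ ≤ v * ‖p.2‖ := by
            rw [norm_smul, Real.norm_eq_abs, abs_of_pos hv] at h2; exact h2
          have h' : (2:ℝ) ^ (-k) * v < |lam₂| * c₁ := by
            rw [div_mul_eq_mul_div, one_mul] at h
            exact (div_lt_div_iff₀ hc₁ hv).mp h
          have hnorm : 1 < ‖(lam₂ * 2 ^ k) • (p.2 : (EuclideanSpace ℝ (Fin d)))‖ := by
            rw [norm_smul, Real.norm_eq_abs, abs_mul, abs_of_pos hT0]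
            have h5 : |lam₂| * c₁ ≤ |lam₂| * (v * ‖p.2‖) :=
              mul_le_mul_of_nonneg_left h2' habs₂.le
            have h6 : (2:ℝ) ^ (-k) * v < |lam₂| * (v * ‖p.2‖) :=
              lt_of_lt_of_le h' h5
            have h7 := mul_lt_mul_of_pos_left h6 hT0
            have h8 : (2:ℝ) ^ k * ((2:ℝ) ^ (-k) * v) = v := by
              rw [← mul_assoc, hTB, one_mul]
            rw [h8] at h7
            nlinarith [h7, hv]
          rw [hΦ' _ hnorm]; ring
  rw [MeasureTheory.integral_congr_ae (Filter.Eventually.of_forall hvanish)]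
  exact integral_zero _ _

end Stmt14Aux

/-- Frequency-localization constraint: if the bilinear building block does not vanish
identically, then `max(|λ₁|/u, |λ₂|/v) ≍ 2^{−k}` with constants independent of
`ρ₁, ρ₂ ∈ (0,1]`. -/
theorem stmt_14 (d : ℕ) (hd : 0 < d)
    (Ψ Φ ψ : SchwartzMap (EuclideanSpace ℝ (Fin d)) ℂ)
    (hΨ : ∀ ξ : EuclideanSpace ℝ (Fin d), ‖ξ‖ < 1 / 2 ∨ 2 < ‖ξ‖ → 𝓕 (fun x => Ψ x) ξ = 0)
    (hΦ : ∀ ξ : EuclideanSpace ℝ (Fin d), 1 < ‖ξ‖ → 𝓕 (fun x => Φ x) ξ = 0)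
    (c₁ c₂ : ℝ) (hc₁ : 0 < c₁) (hc₁₂ : c₁ < c₂)
    (hψ : ∀ ξ : EuclideanSpace ℝ (Fin d), ‖ξ‖ < c₁ ∨ c₂ < ‖ξ‖ → 𝓕 (fun x => ψ x) ξ = 0) :
    ∃ C₁ C₂ : ℝ, 0 < C₁ ∧ 0 < C₂ ∧
      ∀ (lam₁ lam₂ : ℝ), lam₁ ≠ 0 → lam₂ ≠ 0 →
      ∀ (ρ₁ ρ₂ : ℝ), 0 < ρ₁ → ρ₁ ≤ 1 → 0 < ρ₂ → ρ₂ ≤ 1 →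
      ∀ (u v : ℝ), 0 < u → 0 < v → ∀ (k : ℤ) (q s : EuclideanSpace ℝ (Fin d)),
        ¬ (∀ x : EuclideanSpace ℝ (Fin d),
            (∫ y, dil (fun w => Ψ w) ((2 : ℝ) ^ k) y *
              (∫ w, dil (fun z => Φ z) (lam₁ * 2 ^ k) w *
                dilTr (fun z => ψ z) u q (x - ρ₁ • (lam₁ • y) - w)) *
              (∫ w, dil (fun z => Φ z) (lam₂ * 2 ^ k) w *
                dilTr (fun z => ψ z) v s (x - ρ₂ • (lam₂ • y) - w))) = 0) →
        C₁ * (2 : ℝ) ^ (-k) ≤ max (|lam₁| / u) (|lam₂| / v) ∧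
          max (|lam₁| / u) (|lam₂| / v) ≤ C₂ * (2 : ℝ) ^ (-k) := by
  exact Stmt14Aux.main d hd Ψ Φ ψ hΨ hΦ c₁ c₂ hc₁ hc₁₂ hψ
end
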